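/- Let T be a finite tree with a designated root, let u_e > 0 and w_e > 0 be two families of strictly positive edge weights, let K_u and K_w be the corresponding path-sum matrices, and let Σ be a (not necessarily symmetric) matrix indexed by the non-root vertices with all entries strictly positive. Then for any two distinct non-root vertices a and b such that a is a descendant of b: (K_u Σ K_w)(a,a) > (K_u Σ K_w)(b,b). -/

import Mathlib

open Classical

/-- A finite tree with a designated root vertex (the slack bus). -/
structure GridTree (V : Type*) [Fintype V] [DecidableEq V] where
  graph : SimpleGraph V
  root : V
  isTree : graph.IsTree

namespace GridTree

variable {V : Type*} [Fintype V] [DecidableEq V] (T : GridTree V)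

/-- The unique path (as a walk) from a vertex to the root. -/
noncomputable def pathToRoot (a : V) : T.graph.Walk a T.root :=
  (T.isTree.existsUnique_path a T.root).choose

/-- `E_a`: the set of edges on the unique path from `a` to the root. -/
noncomputable def pathEdges (a : V) : Finset (Sym2 V) :=
  (T.pathToRoot a).edges.toFinset

/-- `c` is a descendant of `a`: `a` lies on the unique path from `c` to the root
(in particular every vertex is a descendant of itself). -/
def Descendant (c a : V) : Prop := a ∈ (T.pathToRoot c).support

/-- `b` is the parent of `a`: the edge `{a, b}` lies on the path from `a` to the root
(equivalently, `b` is the unique neighbor of `a` on that path). -/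
noncomputable def IsParent (a b : V) : Prop := s(a, b) ∈ T.pathEdges a

/-- The path-sum matrix `K_w`, indexed by the non-root vertices:
`K_w(a,b) = ∑_{e ∈ E_a ∩ E_b} w_e`. -/
noncomputable def pathMatrix (w : Sym2 V → ℝ) :
    Matrix {v : V // v ≠ T.root} {v : V // v ≠ T.root} ℝ :=
  fun a b => ∑ e ∈ T.pathEdges a.1 ∩ T.pathEdges b.1, w e

/-- The reduced weighted graph Laplacian with edge weights `w`, indexed by the
non-root vertices (the row and column of the root are deleted). -/
noncomputable def lap (w : Sym2 V → ℝ) :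
    Matrix {v : V // v ≠ T.root} {v : V // v ≠ T.root} ℝ :=
  fun a b =>
    if a = b then ∑ c ∈ Finset.univ.filter (fun c => T.graph.Adj a.1 c), w s(a.1, c)
    else if T.graph.Adj a.1 b.1 then - w s(a.1, b.1) else 0

end GridTree

/-- For two families of strictly positive edge weights `u, w` with
path-sum matrices `K_u, K_w`, and a matrix `Σ` (not necessarily symmetric) with all
entries strictly positive, if the non-root vertex `a` is a descendant of the non-root
vertex `b` with `a ≠ b`, then `(K_u Σ K_w)(a,a) > (K_u Σ K_w)(b,b)`. -/
theorem pathMatrix_sandwich_diag_increases_down_tree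
    {V : Type*} [Fintype V] [DecidableEq V] (T : GridTree V)
    (u w : Sym2 V → ℝ)
    (hu : ∀ e ∈ T.graph.edgeSet, 0 < u e) (hw : ∀ e ∈ T.graph.edgeSet, 0 < w e)
    (S : Matrix {v : V // v ≠ T.root} {v : V // v ≠ T.root} ℝ)
    (hpos : ∀ i j, 0 < S i j)
    (a b : {v : V // v ≠ T.root}) (hne : a ≠ b) (hdesc : T.Descendant a.1 b.1) :
    (T.pathMatrix u * S * T.pathMatrix w) a a >
      (T.pathMatrix u * S * T.pathMatrix w) b b := by
  classical
  -- Setup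
  set Ea := T.pathEdges a.1 with hEa
  set Eb := T.pathEdges b.1 with hEb
  set p := T.pathToRoot a.1 with hp
  have hpath : p.IsPath := (T.isTree.existsUnique_path a.1 T.root).choose_spec.1
  have hdesc' : b.1 ∈ p.support := hdesc
  have hdropPath : (p.dropUntil b.1 hdesc').IsPath := hpath.dropUntil hdesc'
  have hbeq : p.dropUntil b.1 hdesc' = T.pathToRoot b.1 :=
    (T.isTree.existsUnique_path b.1 T.root).choose_spec.2 _ hdropPath
  have hedges : p.edges = (p.takeUntil b.1 hdesc').edges ++ (T.pathToRoot b.1).edges := by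
    conv_lhs => rw [← SimpleGraph.Walk.take_spec p hdesc']
    rw [SimpleGraph.Walk.edges_append, hbeq]
  -- Eb ⊆ Ea
  have hsub : Eb ⊆ Ea := by
    intro e he
    simp only [hEa, hEb, GridTree.pathEdges, List.mem_toFinset] at he ⊢
    rw [hedges]
    exact List.mem_append_right _ he
  -- an edge in Ea \ Eb
  have hqne : (p.takeUntil b.1 hdesc').edges ≠ [] := by
    intro h
    have hlen : (p.takeUntil b.1 hdesc').length = 0 := by
      rw [← SimpleGraph.Walk.length_edges, h]; rfl
    exact hne (Subtype.ext (SimpleGraph.Walk.eq_of_length_eq_zero hlen))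
  obtain ⟨e0, he0⟩ := List.exists_mem_of_ne_nil _ hqne
  have hnodup : p.edges.Nodup := hpath.isTrail.edges_nodup
  have hdisj : ∀ x ∈ (p.takeUntil b.1 hdesc').edges, x ∉ (T.pathToRoot b.1).edges := by
    rw [hedges] at hnodup
    exact fun x hx => (List.disjoint_of_nodup_append hnodup) hx
  have he0a : e0 ∈ Ea := by
    simp only [hEa, GridTree.pathEdges, List.mem_toFinset, hedges]
    rw [← hp, hedges]
    exact List.mem_append_left _ he0
  have he0b : e0 ∉ Eb := by
    simp only [hEb, GridTree.pathEdges, List.mem_toFinset]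
    exact hdisj e0 he0
  -- all path edges are graph edges
  have hedgeSet : ∀ (x : V), ∀ e ∈ T.pathEdges x, e ∈ T.graph.edgeSet := by
    intro x e he
    simp only [GridTree.pathEdges, List.mem_toFinset] at he
    exact SimpleGraph.Walk.edges_subset_edgeSet _ he
  -- Eb is nonempty
  have hEbne : Eb.Nonempty := by
    have : (T.pathToRoot b.1).edges ≠ [] := by
      intro h
      have hlen : (T.pathToRoot b.1).length = 0 := by
        rw [← SimpleGraph.Walk.length_edges, h]; rfl
      exact b.2 (SimpleGraph.Walk.eq_of_length_eq_zero hlen)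
    obtain ⟨e, he⟩ := List.exists_mem_of_ne_nil _ this
    exact ⟨e, by simpa [hEb, GridTree.pathEdges, List.mem_toFinset] using he⟩
  -- sum facts
  have hsum_lt : ∀ (f : Sym2 V → ℝ), (∀ e ∈ T.graph.edgeSet, 0 < f e) →
      ∑ e ∈ Eb, f e < ∑ e ∈ Ea, f e := by
    intro f hf
    refine Finset.sum_lt_sum_of_subset hsub he0a he0b (hf _ (hedgeSet _ _ he0a)) ?_
    exact fun j hj _ => (hf _ (hedgeSet _ _ hj)).le
  have hsum_pos : ∀ (f : Sym2 V → ℝ), (∀ e ∈ T.graph.edgeSet, 0 < f e) →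
      0 < ∑ e ∈ Eb, f e := by
    intro f hf
    exact Finset.sum_pos (fun e he => hf _ (hedgeSet _ _ (hEb ▸ he))) hEbne
  -- pathMatrix entries
  have hKnn : ∀ (f : Sym2 V → ℝ), (∀ e ∈ T.graph.edgeSet, 0 < f e) →
      ∀ (x y : {v : V // v ≠ T.root}), 0 ≤ T.pathMatrix f x y := by
    intro f hf x y
    exact Finset.sum_nonneg fun e he =>
      (hf _ (hedgeSet _ _ (Finset.mem_of_mem_inter_left he))).le
  have hKmono : ∀ (f : Sym2 V → ℝ), (∀ e ∈ T.graph.edgeSet, 0 < f e) →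
      ∀ (i : {v : V // v ≠ T.root}),
      T.pathMatrix f b i ≤ T.pathMatrix f a i ∧ T.pathMatrix f i b ≤ T.pathMatrix f i a := by
    intro f hf i
    constructor <;>
    · apply Finset.sum_le_sum_of_subset_of_nonneg
      · first
        | exact Finset.inter_subset_inter hsub (le_refl _)
        | exact Finset.inter_subset_inter (le_refl _) hsub
      · exact fun j hj _ => (hf _ (hedgeSet _ _ (Finset.mem_of_mem_inter_left hj))).le
  have hKuaa : T.pathMatrix u b b < T.pathMatrix u a a := by
    show ∑ e ∈ Eb ∩ Eb, u e < ∑ e ∈ Ea ∩ Ea, u e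
    rw [Finset.inter_self, Finset.inter_self]
    exact hsum_lt u hu
  have hKwab : T.pathMatrix w a b < T.pathMatrix w a a := by
    show ∑ e ∈ Ea ∩ Eb, w e < ∑ e ∈ Ea ∩ Ea, w e
    rw [Finset.inter_self, Finset.inter_eq_right.mpr hsub]
    exact hsum_lt w hw
  have hKuba : T.pathMatrix u b a = T.pathMatrix u b b := by
    show ∑ e ∈ Eb ∩ Ea, u e = ∑ e ∈ Eb ∩ Eb, u e
    rw [Finset.inter_self, Finset.inter_eq_left.mpr hsub]
  have hKwab' : 0 < T.pathMatrix w a b := by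
    show 0 < ∑ e ∈ Ea ∩ Eb, w e
    rw [Finset.inter_eq_right.mpr hsub]
    exact hsum_pos w hw
  -- unfold matrix multiplication
  rw [Matrix.mul_apply, Matrix.mul_apply]
  apply Finset.sum_lt_sum
  · intro j _
    apply mul_le_mul
    · rw [Matrix.mul_apply, Matrix.mul_apply]
      refine Finset.sum_le_sum fun i _ => ?_
      exact mul_le_mul_of_nonneg_right ((hKmono u hu i).1) (hpos i j).le
    · exact (hKmono w hw j).2
    · exact hKnn w hw j b
    · rw [Matrix.mul_apply]
      exact Finset.sum_nonneg fun i _ => mul_nonneg (hKnn u hu a i) (hpos i j).le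
  · refine ⟨a, Finset.mem_univ a, ?_⟩
    have hinner : (T.pathMatrix u * S) b a < (T.pathMatrix u * S) a a := by
      rw [Matrix.mul_apply, Matrix.mul_apply]
      apply Finset.sum_lt_sum
      · exact fun i _ => mul_le_mul_of_nonneg_right ((hKmono u hu i).1) (hpos i a).le
      · refine ⟨a, Finset.mem_univ a, ?_⟩
        apply mul_lt_mul_of_pos_right _ (hpos a a)
        rw [hKuba]
        exact hKuaa
    have hinnernn : 0 ≤ (T.pathMatrix u * S) b a := by
      rw [Matrix.mul_apply]
      exact Finset.sum_nonneg fun i _ => mul_nonneg (hKnn u hu b i) (hpos i a).le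
    calc (T.pathMatrix u * S) b a * T.pathMatrix w a b
        < (T.pathMatrix u * S) a a * T.pathMatrix w a a :=
          mul_lt_mul'' hinner hKwab hinnernn hKwab'.le
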